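/- (Transitions between contractions.) Let (δ, Δ) be galactic space data on a type F, and let α β : K be limited with 0 < β ≤ α. Suppose g_α : F → F_α is an α-contraction onto galactic space data (δ_α, Δ_α) on F_α, and g_β : F → F_β is a β-contraction onto galactic space data (δ_β, Δ_β) on F_β. Then there exists a unique map h : F_α → F_β such that g_β = h ∘ g_α; moreover h is a (β/α)-contraction from (F_α, δ_α, Δ_α) onto (F_β, δ_β, Δ_β) (note 0 < β/α ≤ 1, so β/α is limited). -/

import Mathlib

open ENNReal

variable {K : Type*} [Field K] [LinearOrder K] [IsStrictOrderedRing K]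

/-- `s : K` is infinitesimal: `|s| < f r` for every real `r > 0`. -/
def IsInfinitesimal (f : ℝ →+* K) (s : K) : Prop := ∀ r : ℝ, 0 < r → |s| < f r

/-- `s : K` is limited: `|s| ≤ f r` for some real `r > 0`. -/
def IsLimited (f : ℝ →+* K) (s : K) : Prop := ∃ r : ℝ, 0 < r ∧ |s| ≤ f r

/-- Galactic space data on a type `F`: an extended distance `δ` together with a
galaxy-valued distance `Δ` between metric components, encoded on points. -/
structure GalacticData (K : Type*) [Field K] [LinearOrder K] [IsStrictOrderedRing K] (f : ℝ →+* K) (F : Type*) where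
  δ : F → F → ℝ≥0∞
  Δ : F → F → K
  δ_self : ∀ x, δ x x = 0
  δ_pos : ∀ x y, x ≠ y → 0 < δ x y
  δ_symm : ∀ x y, δ x y = δ y x
  δ_triangle : ∀ x y z, δ x z ≤ δ x y + δ y z
  Δ_congr : ∀ x x' y y', δ x x' ≠ ⊤ → δ y y' ≠ ⊤ → IsLimited f (Δ x y - Δ x' y')
  Δ_symm : ∀ x y, IsLimited f (Δ x y - Δ y x)
  Δ_limited_iff : ∀ x y, IsLimited f (Δ x y) ↔ δ x y ≠ ⊤
  Δ_pos : ∀ x y, δ x y = ⊤ → 0 < Δ x y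
  Δ_triangle : ∀ x y z, Δ x z ≤ Δ x y + Δ y z ∨ IsLimited f (Δ x z - (Δ x y + Δ y z))

/-- `g : F → F'` is a `γ`-contraction between galactic space data. -/
def IsContraction (f : ℝ →+* K) {F F' : Type*}
    (G : GalacticData K f F) (G' : GalacticData K f F') (γ : K) (g : F → F') : Prop :=
  Function.Surjective g ∧
  ∀ x y : F,
    (G.δ x y ≠ ⊤ →
      G'.δ (g x) (g y) ≠ ⊤ ∧
      IsInfinitesimal f (γ * f (G.δ x y).toReal - f (G'.δ (g x) (g y)).toReal)) ∧
    (G.δ x y = ⊤ →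
      (G'.δ (g x) (g y) = ⊤ ↔ ¬ IsLimited f (γ * G.Δ x y)) ∧
      (IsLimited f (γ * G.Δ x y) →
        IsInfinitesimal f (γ * G.Δ x y - f (G'.δ (g x) (g y)).toReal))) ∧
    IsLimited f (G'.Δ (g x) (g y) - γ * G.Δ x y)

section Helpers
variable (f : ℝ →+* K)

lemma f_nonneg {r : ℝ} (hr : 0 ≤ r) : 0 ≤ f r := by
  have h : f r = (f (Real.sqrt r))^2 := by rw [← map_pow, Real.sq_sqrt hr]
  rw [h]; positivity

lemma f_mono : Monotone f := fun a b h => by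
  have := f_nonneg f (sub_nonneg.2 h)
  rw [map_sub] at this; linarith

lemma f_strictMono : StrictMono f := (f_mono f).strictMono_of_injective f.injective

lemma f_pos {r : ℝ} (hr : 0 < r) : 0 < f r := by
  have := f_strictMono f hr; rwa [map_zero] at this

lemma lim_of_inf {s : K} (h : IsInfinitesimal f s) : IsLimited f s :=
  ⟨1, one_pos, (h 1 one_pos).le⟩

lemma inf_mono {s t : K} (hst : |s| ≤ |t|) (h : IsInfinitesimal f t) : IsInfinitesimal f s :=
  fun r hr => lt_of_le_of_lt hst (h r hr)

lemma lim_mono {s t : K} (hst : |s| ≤ |t|) (h : IsLimited f t) : IsLimited f s := by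
  obtain ⟨r, hr, h⟩ := h; exact ⟨r, hr, hst.trans h⟩

lemma inf_neg {s : K} (h : IsInfinitesimal f s) : IsInfinitesimal f (-s) :=
  inf_mono f (abs_neg s).le h

lemma lim_neg {s : K} (h : IsLimited f s) : IsLimited f (-s) :=
  lim_mono f (abs_neg s).le h

lemma gal_inf_add {s t : K} (hs : IsInfinitesimal f s) (ht : IsInfinitesimal f t) :
    IsInfinitesimal f (s + t) := fun r hr => by
  have h1 := hs (r/2) (by linarith)
  have h2 := ht (r/2) (by linarith)
  calc |s + t| ≤ |s| + |t| := abs_add_le _ _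
    _ < f (r/2) + f (r/2) := add_lt_add h1 h2
    _ = f r := by rw [← map_add]; norm_num

lemma lim_add {s t : K} (hs : IsLimited f s) (ht : IsLimited f t) :
    IsLimited f (s + t) := by
  obtain ⟨r, hr, hs⟩ := hs; obtain ⟨r', hr', ht⟩ := ht
  exact ⟨r + r', by linarith, (abs_add_le _ _).trans (by rw [map_add]; exact add_le_add hs ht)⟩

lemma lim_mul {s t : K} (hs : IsLimited f s) (ht : IsLimited f t) :
    IsLimited f (s * t) := by
  obtain ⟨r, hr, hs⟩ := hs; obtain ⟨r', hr', ht⟩ := ht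
  refine ⟨r * r', mul_pos hr hr', ?_⟩
  rw [abs_mul, map_mul]
  exact mul_le_mul hs ht (abs_nonneg _) ((abs_nonneg s).trans hs)

lemma lim_mul_inf {s t : K} (hs : IsLimited f s) (ht : IsInfinitesimal f t) :
    IsInfinitesimal f (s * t) := by
  obtain ⟨r, hr, hs⟩ := hs
  intro ε hε
  have ht' := ht (ε / r) (by positivity)
  have hfr : 0 < f r := f_pos f hr
  calc |s * t| = |s| * |t| := abs_mul s t
    _ ≤ f r * |t| := mul_le_mul_of_nonneg_right hs (abs_nonneg t)
    _ < f r * f (ε / r) := mul_lt_mul_of_pos_left ht' hfr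
    _ = f ε := by rw [← map_mul]; congr 1; field_simp

lemma real_eq_zero_of_inf {r : ℝ} (hr : 0 ≤ r) (h : IsInfinitesimal f (f r)) : r = 0 := by
  by_contra h0
  have hr' : 0 < r := lt_of_le_of_ne hr (Ne.symm h0)
  have := h r hr'
  rw [abs_of_nonneg (f_nonneg f hr)] at this
  exact lt_irrefl _ this

lemma inf_of_mul_lim {γ u : K} (hu : ¬ IsLimited f u) (h : IsLimited f (γ * u)) :
    IsInfinitesimal f γ := by
  obtain ⟨r0, hr0, hle⟩ := h
  intro ε hε
  have hu' : ∀ r : ℝ, 0 < r → f r < |u| := by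
    intro r hr; by_contra hc; exact hu ⟨r, hr, not_lt.1 hc⟩
  have h1 := hu' (r0 / ε) (by positivity)
  have hfpos : 0 < f (r0 / ε) := f_pos f (by positivity)
  have hupos : 0 < |u| := hfpos.trans h1
  have hγu : |γ| ≤ f r0 / |u| := by
    rw [le_div_iff₀ hupos]; rw [abs_mul] at hle; exact hle
  have h2 : f r0 / |u| < f r0 / f (r0 / ε) := by
    exact div_lt_div_of_pos_left (f_pos f hr0) hfpos h1
  have h3 : f r0 / f (r0 / ε) = f ε := by
    rw [eq_comm, eq_div_iff hfpos.ne', ← map_mul]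
    congr 1; field_simp
  calc |γ| ≤ f r0 / |u| := hγu
    _ < f r0 / f (r0 / ε) := h2
    _ = f ε := h3

end Helpers

/-- Transitions between contractions: if `g_α` is an `α`-contraction and `g_β` a
`β`-contraction of the same galactic space, with `0 < β ≤ α`, then `g_β` factors
uniquely through `g_α`, and the factoring map is a `β/α`-contraction. -/
theorem transition_between_contractions (f : ℝ →+* K) (hf : ¬ Function.Surjective f)
    {F Fα Fβ : Type*} (G : GalacticData K f F)
    (Gα : GalacticData K f Fα) (Gβ : GalacticData K f Fβ)
    (α β : K) (hαlim : IsLimited f α) (hβpos : 0 < β) (hβα : β ≤ α)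
    (gα : F → Fα) (gβ : F → Fβ)
    (hgα : IsContraction f G Gα α gα) (hgβ : IsContraction f G Gβ β gβ) :
    (∃! h : Fα → Fβ, gβ = h ∘ gα) ∧
    (∀ h : Fα → Fβ, gβ = h ∘ gα → IsContraction f Gα Gβ (β / α) h) := by
  obtain ⟨hαsurj, hα⟩ := hgα
  obtain ⟨hβsurj, hβ⟩ := hgβ
  have hαpos : 0 < α := hβpos.trans_le hβα
  have hαne : α ≠ 0 := hαpos.ne'
  have hγα : β / α * α = β := div_mul_cancel₀ β hαne
  have hγpos : 0 < β / α := div_pos hβpos hαpos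
  have hγlim : IsLimited f (β / α) := by
    refine ⟨1, one_pos, ?_⟩
    rw [map_one, abs_of_pos hγpos]
    exact div_le_one_of_le₀ hβα hαpos.le
  -- well-definedness
  have key : ∀ x y : F, gα x = gα y → gβ x = gβ y := by
    intro x y hxy
    have hδα0 : Gα.δ (gα x) (gα y) = 0 := by rw [hxy, Gα.δ_self]
    have hδαne : Gα.δ (gα x) (gα y) ≠ ⊤ := by rw [hδα0]; exact zero_ne_top
    by_contra hne0
    have hδβpos : 0 < Gβ.δ (gβ x) (gβ y) := Gβ.δ_pos _ _ hne0
    have hfdβinf : IsInfinitesimal f (f (Gβ.δ (gβ x) (gβ y)).toReal) ∧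
        Gβ.δ (gβ x) (gβ y) ≠ ⊤ := by
      by_cases hd : G.δ x y = ⊤
      · obtain ⟨hiff, himp⟩ := (hα x y).2.1 hd
        have hlimαΔ : IsLimited f (α * G.Δ x y) := not_not.1 fun hn => hδαne (hiff.2 hn)
        have hinfαΔ : IsInfinitesimal f (α * G.Δ x y) := by
          have := himp hlimαΔ
          rwa [hδα0, ENNReal.toReal_zero, map_zero, sub_zero] at this
        have hinfβΔ : IsInfinitesimal f (β * G.Δ x y) := by
          have h1 : β * G.Δ x y = β / α * (α * G.Δ x y) := by
            field_simp
          rw [h1]; exact lim_mul_inf f hγlim hinfαΔ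
        obtain ⟨hiffβ, himpβ⟩ := (hβ x y).2.1 hd
        have hδβne : Gβ.δ (gβ x) (gβ y) ≠ ⊤ :=
          fun h => (hiffβ.1 h) (lim_of_inf f hinfβΔ)
        refine ⟨?_, hδβne⟩
        have h2 := himpβ (lim_of_inf f hinfβΔ)
        have h3 : f (Gβ.δ (gβ x) (gβ y)).toReal
            = β * G.Δ x y + -(β * G.Δ x y - f (Gβ.δ (gβ x) (gβ y)).toReal) := by ring
        rw [h3]
        exact gal_inf_add f hinfβΔ (inf_neg f h2)
      · obtain ⟨_, hinfα⟩ := (hα x y).1 hd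
        rw [hδα0, ENNReal.toReal_zero, map_zero, sub_zero] at hinfα
        obtain ⟨hδβne, hinfβ⟩ := (hβ x y).1 hd
        refine ⟨?_, hδβne⟩
        have h1 : β * f (G.δ x y).toReal = β / α * (α * f (G.δ x y).toReal) := by
          field_simp
        have h2 : IsInfinitesimal f (β * f (G.δ x y).toReal) := by
          rw [h1]; exact lim_mul_inf f hγlim hinfα
        have h3 : f (Gβ.δ (gβ x) (gβ y)).toReal = β * f (G.δ x y).toReal
            + -(β * f (G.δ x y).toReal - f (Gβ.δ (gβ x) (gβ y)).toReal) := by ring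
        rw [h3]
        exact gal_inf_add f h2 (inf_neg f hinfβ)
    obtain ⟨hinf, hneT⟩ := hfdβinf
    have := real_eq_zero_of_inf f ENNReal.toReal_nonneg hinf
    have hδβ0 : Gβ.δ (gβ x) (gβ y) = 0 := by
      rcases (ENNReal.toReal_eq_zero_iff _).1 this with h | h
      · exact h
      · exact absurd h hneT
    rw [hδβ0] at hδβpos
    exact lt_irrefl _ hδβpos
  constructor
  · -- existence and uniqueness of h
    refine ⟨fun a => gβ (hαsurj a).choose, ?_, ?_⟩
    · funext x
      exact (key _ _ (hαsurj (gα x)).choose_spec).symm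
    · intro h' hh'
      funext a
      obtain ⟨x, rfl⟩ := hαsurj a
      have h1 : gβ ((hαsurj (gα x)).choose) = gβ x := key _ _ (hαsurj (gα x)).choose_spec
      have h2 := congrFun hh' x
      simp only [Function.comp_apply] at h2
      simp [← h2, h1]
  · intro h hh
    have hcomp : ∀ x : F, h (gα x) = gβ x := fun x => (congrFun hh x).symm
    constructor
    · intro b
      obtain ⟨x, rfl⟩ := hβsurj b
      exact ⟨gα x, hcomp x⟩
    · intro a b
      obtain ⟨x, rfl⟩ := hαsurj a
      obtain ⟨y, rfl⟩ := hαsurj b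
      rw [hcomp x, hcomp y]
      have hC : IsLimited f (Gβ.Δ (gβ x) (gβ y) - β / α * Gα.Δ (gα x) (gα y)) := by
        have hLα := (hα x y).2.2
        have hLβ := (hβ x y).2.2
        have hid : Gβ.Δ (gβ x) (gβ y) - β / α * Gα.Δ (gα x) (gα y)
            = (Gβ.Δ (gβ x) (gβ y) - β * G.Δ x y)
              + -(β / α * (Gα.Δ (gα x) (gα y) - α * G.Δ x y)) := by
          field_simp; ring
        rw [hid]
        exact lim_add f hLβ (lim_neg f (lim_mul f hγlim hLα))
      refine ⟨?_, ?_, hC⟩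
      · -- condition (a)
        intro hδαne
        by_cases hd : G.δ x y = ⊤
        · obtain ⟨hiff, himp⟩ := (hα x y).2.1 hd
          have hlimαΔ : IsLimited f (α * G.Δ x y) := not_not.1 fun hn => hδαne (hiff.2 hn)
          have hinfα := himp hlimαΔ
          have hlimβΔ : IsLimited f (β * G.Δ x y) := by
            have h1 : β * G.Δ x y = β / α * (α * G.Δ x y) := by field_simp
            rw [h1]; exact lim_mul f hγlim hlimαΔ
          obtain ⟨hiffβ, himpβ⟩ := (hβ x y).2.1 hd
          have hδβne : Gβ.δ (gβ x) (gβ y) ≠ ⊤ := fun hT => (hiffβ.1 hT) hlimβΔ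
          refine ⟨hδβne, ?_⟩
          have hinfβ := himpβ hlimβΔ
          have hid : β / α * f (Gα.δ (gα x) (gα y)).toReal - f (Gβ.δ (gβ x) (gβ y)).toReal
              = -(β / α * (α * G.Δ x y - f (Gα.δ (gα x) (gα y)).toReal))
                + (β * G.Δ x y - f (Gβ.δ (gβ x) (gβ y)).toReal) := by
            field_simp; ring
          rw [hid]
          exact gal_inf_add f (inf_neg f (lim_mul_inf f hγlim hinfα)) hinfβ
        · obtain ⟨_, hinfα⟩ := (hα x y).1 hd
          obtain ⟨hδβne, hinfβ⟩ := (hβ x y).1 hd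
          refine ⟨hδβne, ?_⟩
          have hid : β / α * f (Gα.δ (gα x) (gα y)).toReal - f (Gβ.δ (gβ x) (gβ y)).toReal
              = -(β / α * (α * f (G.δ x y).toReal - f (Gα.δ (gα x) (gα y)).toReal))
                + (β * f (G.δ x y).toReal - f (Gβ.δ (gβ x) (gβ y)).toReal) := by
            field_simp; ring
          rw [hid]
          exact gal_inf_add f (inf_neg f (lim_mul_inf f hγlim hinfα)) hinfβ
      · -- condition (b)
        intro hδαT
        have hd : G.δ x y = ⊤ := by
          by_contra hd
          exact ((hα x y).1 hd).1 hδαT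
        obtain ⟨hiff, _⟩ := (hα x y).2.1 hd
        have hnotlimαΔ : ¬ IsLimited f (α * G.Δ x y) := hiff.1 hδαT
        have hL : IsLimited f (Gα.Δ (gα x) (gα y) - α * G.Δ x y) := (hα x y).2.2
        have hγL : IsLimited f (β / α * (Gα.Δ (gα x) (gα y) - α * G.Δ x y)) :=
          lim_mul f hγlim hL
        have he : β / α * Gα.Δ (gα x) (gα y)
            = β * G.Δ x y + β / α * (Gα.Δ (gα x) (gα y) - α * G.Δ x y) := by
          field_simp; ring
        have claim1 : IsLimited f (β / α * Gα.Δ (gα x) (gα y)) ↔ IsLimited f (β * G.Δ x y) := by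
          constructor
          · intro h1
            have : β * G.Δ x y = β / α * Gα.Δ (gα x) (gα y)
                + -(β / α * (Gα.Δ (gα x) (gα y) - α * G.Δ x y)) := by field_simp; ring
            rw [this]
            exact lim_add f h1 (lim_neg f hγL)
          · intro h1
            rw [he]
            exact lim_add f h1 hγL
        obtain ⟨hiffβ, himpβ⟩ := (hβ x y).2.1 hd
        refine ⟨hiffβ.trans (not_congr claim1.symm), ?_⟩
        intro hlimγΔα
        have hlimβΔ : IsLimited f (β * G.Δ x y) := claim1.1 hlimγΔα
        have hinfβ := himpβ hlimβΔ
        -- β/α is infinitesimal here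
        have hγinf : IsInfinitesimal f (β / α) := by
          apply inf_of_mul_lim f hnotlimαΔ
          have h1 : β / α * (α * G.Δ x y) = β * G.Δ x y := by field_simp
          rw [h1]; exact hlimβΔ
        have hγLinf : IsInfinitesimal f (β / α * (Gα.Δ (gα x) (gα y) - α * G.Δ x y)) := by
          have h1 : β / α * (Gα.Δ (gα x) (gα y) - α * G.Δ x y)
              = (Gα.Δ (gα x) (gα y) - α * G.Δ x y) * (β / α) := by ring
          rw [h1]; exact lim_mul_inf f hL hγinf
        have hid : β / α * Gα.Δ (gα x) (gα y) - f (Gβ.δ (gβ x) (gβ y)).toReal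
            = (β * G.Δ x y - f (Gβ.δ (gβ x) (gβ y)).toReal)
              + β / α * (Gα.Δ (gα x) (gα y) - α * G.Δ x y) := by
          field_simp; ring
        rw [hid]
        exact gal_inf_add f hinfβ hγLinf
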